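/- Suppose in addition that f is continuous at Lebesgue-almost every point of [0,1]^d. For each k ≥ 0 let U_k ⊆ [0,1]^d × [0,C] be the union of all level-k cells visited by f. Then the (d+1)-dimensional Lebesgue measure of ⋂_{k≥0} U_k is zero. (Hence, up to a null set, every point of [0,1]^d × [0,C] eventually lies in a cell on which acceptance or rejection can be decided; Theorem 2.) -/
import Mathlib


/-- The dyadic cube `R* = ∏_i [m_i·2^{-k}, (m_i+1)·2^{-k}]` of the level-`k` grid. -/
def dyadicCube (d k : ℕ) (m : Fin d → ℕ) : Set (Fin d → ℝ) :=
  {x | ∀ i, (m i : ℝ) / 2 ^ k ≤ x i ∧ x i ≤ ((m i : ℝ) + 1) / 2 ^ k}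

/-- The level-`k` cell `R* × [j·C·2^{-k}, (j+1)·C·2^{-k}]` is visited by `f` if
`sup_{R*} f ≥ j·C·2^{-k}` and `inf_{R*} f ≤ (j+1)·C·2^{-k}`. -/
def VisitedCell (d k : ℕ) (C : ℝ) (f : (Fin d → ℝ) → ℝ) (m : Fin d → ℕ) (j : ℕ) : Prop :=
  (j : ℝ) * C / 2 ^ k ≤ sSup (f '' dyadicCube d k m) ∧
    sInf (f '' dyadicCube d k m) ≤ ((j : ℝ) + 1) * C / 2 ^ k

/-- `N_k`, the number of level-`k` cells visited by `f`. -/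
noncomputable def Nvisited (d : ℕ) (C : ℝ) (f : (Fin d → ℝ) → ℝ) (k : ℕ) : ℕ :=
  {p : (Fin d → ℕ) × ℕ |
    (∀ i, p.1 i < 2 ^ k) ∧ p.2 < 2 ^ k ∧ VisitedCell d k C f p.1 p.2}.ncard

/-- The upper dyadic Darboux sum `I_k^+ = 2^{-dk} Σ_{R*} sup_{R*} f`. -/
noncomputable def Iplus (d : ℕ) (f : (Fin d → ℝ) → ℝ) (k : ℕ) : ℝ :=
  ((2 : ℝ) ^ (d * k))⁻¹ *
    ∑ m ∈ Fintype.piFinset (fun _ : Fin d => Finset.range (2 ^ k)),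
      sSup (f '' dyadicCube d k m)

/-- The lower dyadic Darboux sum `I_k^- = 2^{-dk} Σ_{R*} inf_{R*} f`. -/
noncomputable def Iminus (d : ℕ) (f : (Fin d → ℝ) → ℝ) (k : ℕ) : ℝ :=
  ((2 : ℝ) ^ (d * k))⁻¹ *
    ∑ m ∈ Fintype.piFinset (fun _ : Fin d => Finset.range (2 ^ k)),
      sInf (f '' dyadicCube d k m)

open MeasureTheory

/-- `U_k`, the union of all level-`k` cells visited by `f`, as a subset of `ℝ^d × ℝ`. -/
def visitedUnion (d : ℕ) (C : ℝ) (f : (Fin d → ℝ) → ℝ) (k : ℕ) :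
    Set ((Fin d → ℝ) × ℝ) :=
  ⋃ (p : (Fin d → ℕ) × ℕ)
    (_ : (∀ i, p.1 i < 2 ^ k) ∧ p.2 < 2 ^ k ∧ VisitedCell d k C f p.1 p.2),
    dyadicCube d k p.1 ×ˢ Set.Icc ((p.2 : ℝ) * C / 2 ^ k) (((p.2 : ℝ) + 1) * C / 2 ^ k)


lemma dyadicCube_eq' (d k : ℕ) (m : Fin d → ℕ) :
    dyadicCube d k m =
      Set.Icc (fun i => (m i : ℝ) / 2 ^ k) (fun i => ((m i : ℝ) + 1) / 2 ^ k) := by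
  ext x
  simp [dyadicCube, Set.mem_Icc, Pi.le_def, forall_and]

lemma cube_subset_Icc' {d k : ℕ} {m : Fin d → ℕ} (hm : ∀ i, m i < 2 ^ k) :
    dyadicCube d k m ⊆ Set.Icc (0 : Fin d → ℝ) 1 := by
  intro x hx
  rw [Set.mem_Icc, Pi.le_def, Pi.le_def]
  constructor
  · intro i
    simpa using le_trans (by positivity) (hx i).1
  · intro i
    have h1 : (m i : ℝ) + 1 ≤ 2 ^ k := by exact_mod_cast hm i
    have := (hx i).2
    have h2 : ((m i : ℝ) + 1) / 2 ^ k ≤ 1 := by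
      rw [div_le_one (by positivity)]; exact h1
    simpa using this.trans h2

lemma measurableSet_visitedUnion' (d k : ℕ) (C : ℝ) (f : (Fin d → ℝ) → ℝ) :
    MeasurableSet (visitedUnion d C f k) := by
  apply MeasurableSet.iUnion
  intro p
  apply MeasurableSet.iUnion
  intro _
  exact (dyadicCube_eq' d k p.1 ▸ measurableSet_Icc).prod measurableSet_Icc

lemma key_eq' (d : ℕ) (C : ℝ) (hC : 0 < C) (f : (Fin d → ℝ) → ℝ)
    (x : Fin d → ℝ) (y : ℝ)
    (hc : ContinuousWithinAt f (Set.Icc 0 1) x)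
    (hy : ∀ k, (x, y) ∈ visitedUnion d C f k) : y = f x := by
  have main : ∀ ε > 0, |y - f x| ≤ 2 * ε := by
    intro ε hε
    obtain ⟨δ, hδ, hδ'⟩ := Metric.continuousWithinAt_iff.mp hc ε hε
    obtain ⟨k, hk⟩ : ∃ k : ℕ, (1 / 2 : ℝ) ^ k < min δ ε / (C + 1) := by
      apply exists_pow_lt_of_lt_one (by positivity)
      norm_num
    have h2k : (0 : ℝ) < 2 ^ k := by positivity
    have hrk : (1 / 2 : ℝ) ^ k = 1 / 2 ^ k := by
      rw [div_pow]; norm_num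
    rw [hrk] at hk
    have hmin : min δ ε / (C + 1) ≤ min δ ε :=
      div_le_self (le_min hδ.le hε.le) (by linarith)
    have hδk : 1 / 2 ^ k < δ := lt_of_lt_of_le hk (hmin.trans (min_le_left _ _))
    have hCk : C / 2 ^ k < ε := by
      have h1 : (1 / 2 ^ k) * (C + 1) < min δ ε := by
        rw [← lt_div_iff₀ (by linarith)]; exact hk
      have h2 : min δ ε ≤ ε := min_le_right _ _
      have h3 : C / 2 ^ k = C * (1 / 2 ^ k) := by ring
      nlinarith [one_div_pos.mpr h2k]
    have hyk := hy k
    simp only [visitedUnion, Set.mem_iUnion] at hyk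
    obtain ⟨p, ⟨hm, hj, hvis⟩, hmem⟩ := hyk
    have hxc : x ∈ dyadicCube d k p.1 := hmem.1
    have hyI : y ∈ Set.Icc ((p.2 : ℝ) * C / 2 ^ k) (((p.2 : ℝ) + 1) * C / 2 ^ k) :=
      hmem.2
    have hclose : ∀ x' ∈ dyadicCube d k p.1, |f x' - f x| < ε := by
      intro x' hx'
      have hdist : dist x' x ≤ 1 / 2 ^ k := by
        rw [dist_pi_le_iff (by positivity)]
        intro i
        have h1 := hx' i
        have h2 := hxc i
        have h3 : ((p.1 i : ℝ) + 1) / 2 ^ k - (p.1 i : ℝ) / 2 ^ k = 1 / 2 ^ k := by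
          ring
        rw [Real.dist_eq, abs_le]
        constructor <;> linarith
      have := hδ' (cube_subset_Icc' hm hx') (lt_of_le_of_lt hdist hδk)
      rwa [Real.dist_eq] at this
    have hne : (f '' dyadicCube d k p.1).Nonempty := ⟨f x, x, hxc, rfl⟩
    have hsup : sSup (f '' dyadicCube d k p.1) ≤ f x + ε := by
      apply csSup_le hne
      rintro z ⟨x', hx', rfl⟩
      have := abs_lt.mp (hclose x' hx')
      linarith [this.2]
    have hinf : f x - ε ≤ sInf (f '' dyadicCube d k p.1) := by
      apply le_csInf hne
      rintro z ⟨x', hx', rfl⟩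
      have := abs_lt.mp (hclose x' hx')
      linarith [this.1]
    have e1 : (p.2 : ℝ) * C / 2 ^ k ≤ f x + ε := hvis.1.trans hsup
    have e2 : f x - ε ≤ ((p.2 : ℝ) + 1) * C / 2 ^ k := hinf.trans hvis.2
    have e3 : ((p.2 : ℝ) + 1) * C / 2 ^ k = (p.2 : ℝ) * C / 2 ^ k + C / 2 ^ k := by
      ring
    have hy1 := hyI.1
    have hy2 := hyI.2
    rw [abs_le]
    constructor <;> linarith
  by_contra h
  have habs : 0 < |y - f x| := by
    rw [abs_pos, sub_ne_zero]; exact h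
  have := main (|y - f x| / 3) (by linarith)
  linarith

/-- Theorem 2: if `f` is continuous at Lebesgue-almost every point of
`[0,1]^d`, then the `(d+1)`-dimensional Lebesgue measure of `⋂_k U_k` is zero. -/
theorem stmt8 (d : ℕ) (hd : 1 ≤ d) (C : ℝ) (hC : 0 < C)
    (f : (Fin d → ℝ) → ℝ)
    (hf : ∀ x ∈ Set.Icc (0 : Fin d → ℝ) 1, f x ∈ Set.Icc 0 C)
    (hcont : volume {x ∈ Set.Icc (0 : Fin d → ℝ) 1 |
        ¬ ContinuousWithinAt f (Set.Icc 0 1) x} = 0) :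
    volume (⋂ k : ℕ, visitedUnion d C f k) = 0 := by
  have hmeas : MeasurableSet (⋂ k : ℕ, visitedUnion d C f k) :=
    MeasurableSet.iInter fun k => measurableSet_visitedUnion' d k C f
  rw [Measure.volume_eq_prod, Measure.prod_apply hmeas]
  have hsub : {x : Fin d → ℝ |
      ¬ volume (Prod.mk x ⁻¹' ⋂ k, visitedUnion d C f k) = 0} ⊆
      {x ∈ Set.Icc (0 : Fin d → ℝ) 1 | ¬ ContinuousWithinAt f (Set.Icc 0 1) x} := by
    intro x hx
    by_contra hbad
    apply hx
    have hslice : Prod.mk x ⁻¹' (⋂ k, visitedUnion d C f k) ⊆ {f x} := by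
      intro y hy
      simp only [Set.mem_preimage, Set.mem_iInter] at hy
      have hxIcc : x ∈ Set.Icc (0 : Fin d → ℝ) 1 := by
        have h0 := hy 0
        simp only [visitedUnion, Set.mem_iUnion] at h0
        obtain ⟨p, ⟨hm, -, -⟩, hmem⟩ := h0
        exact cube_subset_Icc' hm hmem.1
      have hc : ContinuousWithinAt f (Set.Icc 0 1) x := by
        by_contra hc
        exact hbad ⟨hxIcc, hc⟩
      exact key_eq' d C hC f x y hc hy
    exact measure_mono_null hslice (measure_singleton _)
  have hae : ∀ᵐ x : Fin d → ℝ,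
      volume (Prod.mk x ⁻¹' ⋂ k, visitedUnion d C f k) = 0 := by
    rw [ae_iff]
    exact measure_mono_null hsub hcont
  rw [lintegral_congr_ae (g := fun _ => 0) hae, lintegral_zero]
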